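/- Let A₀, A₁ be n×n real matrices, λ ∈ [0,1], β ∈ (0,1], and define 𝓛(X) = λA₁XA₁ᵀ + (1-λ)A₀XA₀ᵀ for n×n real matrices X; let C be a symmetric n×n real matrix and define F(P) = β·𝓛(P) + C. Suppose there exists a symmetric positive definite matrix Ξ with Ξ - β·𝓛(Ξ) positive definite, and let P* be the unique symmetric matrix with P* = F(P*). If P⁽⁰⁾ is a symmetric matrix with F(P⁽⁰⁾) ⪯ P⁽⁰⁾, then the iterates P⁽ⁱ⁺¹⁾ = F(P⁽ⁱ⁾) satisfy P⁽ⁱ⁺¹⁾ ⪯ P⁽ⁱ⁾ for all i ≥ 0, and P⁽ⁱ⁾ converges to P* as i → ∞. -/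

import Mathlib

open Matrix Filter

lemma psdAdd {n : ℕ} {A B : Matrix (Fin n) (Fin n) ℝ} (hA : A.PosSemidef) (hB : B.PosSemidef) :
    (A + B).PosSemidef := by
  refine Matrix.PosSemidef.of_dotProduct_mulVec_nonneg (hA.1.add hB.1) fun x => ?_
  have := hA.dotProduct_mulVec_nonneg x; have := hB.dotProduct_mulVec_nonneg x
  simp only [add_mulVec, dotProduct_add] at *
  linarith

lemma psdSmul {n : ℕ} {A : Matrix (Fin n) (Fin n) ℝ} {c : ℝ} (hA : A.PosSemidef) (hc : 0 ≤ c) :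
    (c • A).PosSemidef := by
  refine Matrix.PosSemidef.of_dotProduct_mulVec_nonneg ?_ fun x => ?_
  · unfold Matrix.IsHermitian
    rw [conjTranspose_smul, hA.1]
    simp
  · have := hA.dotProduct_mulVec_nonneg x
    rw [smul_mulVec, dotProduct_smul]
    exact mul_nonneg hc this

lemma quadUB {n : ℕ} (S : Matrix (Fin n) (Fin n) ℝ) :
    ∃ K : ℝ, 0 ≤ K ∧ ∀ x : Fin n → ℝ, |x ⬝ᵥ S *ᵥ x| ≤ K * (x ⬝ᵥ x) := by
  refine ⟨∑ i, ∑ j, |S i j|, by positivity, fun x => ?_⟩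
  have hxx : ∀ i : Fin n, x i ^ 2 ≤ x ⬝ᵥ x := by
    intro i
    unfold dotProduct
    have : x i * x i = x i ^2 := by ring
    rw [← this]
    exact Finset.single_le_sum (f := fun j => x j * x j) (fun j _ => mul_self_nonneg _)
      (Finset.mem_univ i)
  have h1 : |x ⬝ᵥ S *ᵥ x| ≤ ∑ i, ∑ j, |x i * (S i j * x j)| := by
    calc |x ⬝ᵥ S *ᵥ x| = |∑ i, x i * ∑ j, S i j * x j| := by rfl
    _ ≤ ∑ i, |x i * ∑ j, S i j * x j| := Finset.abs_sum_le_sum_abs _ _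
    _ = ∑ i, |x i| * |∑ j, S i j * x j| := by simp [abs_mul]
    _ ≤ ∑ i, |x i| * ∑ j, |S i j * x j| := by
        refine Finset.sum_le_sum fun i _ =>
          mul_le_mul_of_nonneg_left (Finset.abs_sum_le_sum_abs _ _) (abs_nonneg _)
    _ = ∑ i, ∑ j, |x i * (S i j * x j)| := by
        simp [Finset.mul_sum, abs_mul, mul_assoc]
  refine h1.trans ?_
  rw [Finset.sum_mul]
  refine Finset.sum_le_sum fun i _ => ?_
  rw [Finset.sum_mul]
  refine Finset.sum_le_sum fun j _ => ?_
  have : |x i * (S i j * x j)| = |S i j| * |x i * x j| := by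
    rw [abs_mul, abs_mul, abs_mul]; ring
  rw [this]
  refine mul_le_mul_of_nonneg_left ?_ (abs_nonneg _)
  have := hxx i; have := hxx j
  have habs : |x i * x j| ≤ (x i ^2 + x j ^2)/2 := by
    cases abs_cases (x i * x j) with
    | inl h => nlinarith [sq_nonneg (x i - x j)]
    | inr h => nlinarith [sq_nonneg (x i + x j)]
  linarith

lemma quadLB {n : ℕ} {D : Matrix (Fin n) (Fin n) ℝ} (hD : D.PosDef) :
    ∃ δ : ℝ, 0 < δ ∧ ∀ x : Fin n → ℝ, δ * (x ⬝ᵥ x) ≤ x ⬝ᵥ D *ᵥ x := by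
  rcases Nat.eq_zero_or_pos n with hn | hn
  · subst hn
    exact ⟨1, one_pos, fun x => by simp [dotProduct, Finset.univ_eq_empty]⟩
  haveI : Nonempty (Fin n) := Fin.pos_iff_nonempty.mp hn
  set E := EuclideanSpace ℝ (Fin n)
  have hquad : ∀ x : E, ((x : Fin n → ℝ) ⬝ᵥ x) = ‖x‖ ^ 2 := by
    intro x
    rw [← real_inner_self_eq_norm_sq]
    rw [PiLp.inner_apply]
    simp [dotProduct, RCLike.inner_apply, sq]
  have hf : Continuous fun x : E => (x : Fin n → ℝ) ⬝ᵥ D *ᵥ (x : Fin n → ℝ) := by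
    have hc : ∀ i : Fin n, Continuous fun x : E => (x : Fin n → ℝ) i := by
      intro i; exact (EuclideanSpace.proj i).continuous
    unfold dotProduct mulVec
    simp only [dotProduct]
    exact continuous_finset_sum _ fun i _ =>
      ((hc i).mul (continuous_finset_sum _ fun j _ => (continuous_const.mul (hc j))))
  have hsphere : (Metric.sphere (0 : E) 1).Nonempty := NormedSpace.sphere_nonempty.mpr zero_le_one
  obtain ⟨u, hu, hmin⟩ := (isCompact_sphere (0 : E) 1).exists_isMinOn hsphere hf.continuousOn
  have hunorm : ‖u‖ = 1 := by simpa using mem_sphere_zero_iff_norm.mp hu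
  have hune : (u : Fin n → ℝ) ≠ 0 := by
    intro h
    have : u = 0 := by simpa using congrArg (WithLp.toLp 2) h
    rw [this] at hunorm; simp at hunorm
  set δ := (u : Fin n → ℝ) ⬝ᵥ D *ᵥ (u : Fin n → ℝ) with hδ
  have hδpos : 0 < δ := by
    have := hD.dotProduct_mulVec_pos hune
    simpa using this
  refine ⟨δ, hδpos, fun x => ?_⟩
  by_cases hx : x = 0
  · subst hx; simp
  · set y : E := WithLp.toLp 2 x
    have hy : y ≠ 0 := fun h => hx (by simpa [y] using congrArg WithLp.ofLp h)
    have hny : ‖y‖ ≠ 0 := norm_ne_zero_iff.mpr hy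
    set v : E := ‖y‖⁻¹ • y with hv
    have hvs : v ∈ Metric.sphere (0 : E) 1 := by
      rw [mem_sphere_zero_iff_norm, hv, norm_smul]
      simp [abs_of_nonneg (norm_nonneg y), inv_mul_cancel₀ hny]
    have hle : δ ≤ (v : Fin n → ℝ) ⬝ᵥ D *ᵥ (v : Fin n → ℝ) := hmin hvs
    have hvq : (v : Fin n → ℝ) ⬝ᵥ D *ᵥ (v : Fin n → ℝ)
        = ‖y‖⁻¹ * ‖y‖⁻¹ * ((x : Fin n → ℝ) ⬝ᵥ D *ᵥ x) := by
      have : (v : Fin n → ℝ) = ‖y‖⁻¹ • (x : Fin n → ℝ) := rfl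
      rw [this, smul_dotProduct, mulVec_smul, dotProduct_smul]
      simp [mul_assoc]
    have hxy : (x ⬝ᵥ x) = ‖y‖ ^ 2 := hquad y
    rw [hvq] at hle
    have h2 : 0 < ‖y‖ := norm_pos_iff.mpr hy
    show δ * (x ⬝ᵥ x) ≤ x ⬝ᵥ D *ᵥ x
    rw [hxy]
    have h3 : ‖y‖⁻¹ * ‖y‖⁻¹ = (‖y‖^2)⁻¹ := by rw [pow_two, mul_inv]
    rw [h3] at hle
    have h4 : 0 < ‖y‖^2 := by positivity
    calc δ * ‖y‖^2 ≤ ((‖y‖^2)⁻¹ * (x ⬝ᵥ D *ᵥ x)) * ‖y‖^2 := by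
          exact mul_le_mul_of_nonneg_right hle (le_of_lt h4)
    _ = x ⬝ᵥ D *ᵥ x := by field_simp

lemma entryBound {n : ℕ} {S T : Matrix (Fin n) (Fin n) ℝ} (hS : Sᵀ = S)
    (h1 : (T - S).PosSemidef) (h2 : (T + S).PosSemidef) (a b : Fin n) :
    |S a b| ≤ (T a a + T b b) / 2 := by
  have hx : ∀ (M : Matrix (Fin n) (Fin n) ℝ), M.PosSemidef → ∀ x : Fin n → ℝ,
      0 ≤ x ⬝ᵥ M *ᵥ x := by
    intro M hM x
    simpa using hM.dotProduct_mulVec_nonneg x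
  have q : ∀ (M : Matrix (Fin n) (Fin n) ℝ) (c d : ℝ),
      (Pi.single a c + Pi.single b d) ⬝ᵥ M *ᵥ (Pi.single a c + Pi.single b d)
        = c*c*M a a + c*d*M a b + d*c*M b a + d*d*M b b := by
    intro M c d
    rw [mulVec_add, dotProduct_add, add_dotProduct, add_dotProduct,
      mulVec_single, mulVec_single]
    rw [single_dotProduct, single_dotProduct, single_dotProduct, single_dotProduct]
    simp only [Pi.smul_apply, op_smul_eq_mul, Matrix.col_apply]
    ring
  have hba : S b a = S a b := by
    have h := congrFun (congrFun hS a) b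
    rwa [Matrix.transpose_apply] at h
  have e1 : 0 ≤ (T a a - S a a) + (T a b - S a b) + (T b a - S b a) + (T b b - S b b) := by
    have := hx _ h1 (Pi.single a 1 + Pi.single b 1)
    rw [q] at this
    simpa [Matrix.sub_apply] using this
  have e2 : 0 ≤ (T a a - S a a) - (T a b - S a b) - (T b a - S b a) + (T b b - S b b) := by
    have := hx _ h1 (Pi.single a 1 + Pi.single b (-1))
    rw [q] at this
    have h' := this
    simp only [Matrix.sub_apply] at h'
    nlinarith [h']
  have e3 : 0 ≤ (T a a + S a a) + (T a b + S a b) + (T b a + S b a) + (T b b + S b b) := by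
    have := hx _ h2 (Pi.single a 1 + Pi.single b 1)
    rw [q] at this
    simpa [Matrix.add_apply] using this
  have e4 : 0 ≤ (T a a + S a a) - (T a b + S a b) - (T b a + S b a) + (T b b + S b b) := by
    have := hx _ h2 (Pi.single a 1 + Pi.single b (-1))
    rw [q] at this
    have h' := this
    simp only [Matrix.add_apply] at h'
    nlinarith [h']
  rcases abs_cases (S a b) with ⟨h, _⟩ | ⟨h, _⟩ <;> rw [h] <;> linarith

/-- Remark 3 of the paper: starting from any symmetric `P⁽⁰⁾` with `F(P⁽⁰⁾) ⪯ P⁽⁰⁾`,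
the iterates `P⁽ⁱ⁺¹⁾ = F(P⁽ⁱ⁾)` of the affine Lyapunov operator
`F(P) = β 𝓛(P) + C` are Loewner-nonincreasing and converge to the unique symmetric
fixed point `P*`. -/
theorem stmt8 (n : ℕ) (A₀ A₁ : Matrix (Fin n) (Fin n) ℝ)
    (lam : ℝ) (hlam0 : 0 ≤ lam) (hlam1 : lam ≤ 1)
    (β : ℝ) (hβ0 : 0 < β) (hβ1 : β ≤ 1)
    (L : Matrix (Fin n) (Fin n) ℝ → Matrix (Fin n) (Fin n) ℝ)
    (hL : ∀ X, L X = lam • (A₁ * X * A₁ᵀ) + (1 - lam) • (A₀ * X * A₀ᵀ))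
    (C : Matrix (Fin n) (Fin n) ℝ) (hC : Cᵀ = C)
    (F : Matrix (Fin n) (Fin n) ℝ → Matrix (Fin n) (Fin n) ℝ)
    (hF : ∀ P, F P = β • L P + C)
    (Ξ : Matrix (Fin n) (Fin n) ℝ) (hΞ : Ξ.PosDef)
    (hlyap : (Ξ - β • L Ξ).PosDef)
    (Pstar : Matrix (Fin n) (Fin n) ℝ) (hPstarSymm : Pstarᵀ = Pstar)
    (hPstarFix : Pstar = F Pstar)
    (hPstarUniq : ∀ Q : Matrix (Fin n) (Fin n) ℝ, Qᵀ = Q → Q = F Q → Q = Pstar)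
    (P : ℕ → Matrix (Fin n) (Fin n) ℝ)
    (hP0symm : (P 0)ᵀ = P 0) (hP0 : (P 0 - F (P 0)).PosSemidef)
    (hPit : ∀ i, P (i + 1) = F (P i)) :
    (∀ i, (P i - P (i + 1)).PosSemidef) ∧
      Tendsto P atTop (nhds Pstar) := by
  -- Basic properties of L
  have Lmono : ∀ {X : Matrix (Fin n) (Fin n) ℝ}, X.PosSemidef → (L X).PosSemidef := by
    intro X hX
    rw [hL]
    refine psdAdd (psdSmul ?_ hlam0) (psdSmul ?_ (by linarith))
    · have := hX.mul_mul_conjTranspose_same A₁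
      rwa [conjTranspose_eq_transpose_of_trivial] at this
    · have := hX.mul_mul_conjTranspose_same A₀
      rwa [conjTranspose_eq_transpose_of_trivial] at this
  have Lsub : ∀ X Y, L (X - Y) = L X - L Y := by
    intro X Y
    simp only [hL, Matrix.mul_sub, Matrix.sub_mul, smul_sub]
    abel
  have Ladd : ∀ X Y, L (X + Y) = L X + L Y := by
    intro X Y
    simp only [hL, Matrix.mul_add, Matrix.add_mul, smul_add]
    abel
  have Lsmul : ∀ (c : ℝ) X, L (c • X) = c • L X := by
    intro c X
    simp only [hL, Matrix.mul_smul, Matrix.smul_mul, smul_add, smul_smul, mul_comm c]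
  have Fdiff : ∀ X Y, F X - F Y = β • L (X - Y) := by
    intro X Y
    rw [hF, hF, Lsub, smul_sub]
    abel
  have Lsymm : ∀ {X : Matrix (Fin n) (Fin n) ℝ}, Xᵀ = X → (L X)ᵀ = L X := by
    intro X hX
    simp [hL, transpose_add, transpose_smul, transpose_mul, transpose_transpose, hX,
      Matrix.mul_assoc]
  have hΞsymm : Ξᵀ = Ξ := by
    rw [← conjTranspose_eq_transpose_of_trivial]; exact hΞ.1
  -- Symmetry of the iterates
  have Psymm : ∀ i, (P i)ᵀ = P i := by
    intro i
    induction i with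
    | zero => exact hP0symm
    | succ k ih => rw [hPit, hF, transpose_add, transpose_smul, Lsymm ih, hC]
  -- Part 1: monotonicity
  have part1 : ∀ i, (P i - P (i + 1)).PosSemidef := by
    intro i
    induction i with
    | zero => rw [hPit]; exact hP0
    | succ k ih =>
      have e : P (k+1) - P (k+2) = β • L (P k - P (k+1)) := by
        conv_lhs => rw [hPit k, hPit (k+1)]
        exact Fdiff _ _
      rw [e]
      exact psdSmul (Lmono ih) hβ0.le
  refine ⟨part1, ?_⟩
  -- The difference sequence
  set D : ℕ → Matrix (Fin n) (Fin n) ℝ := fun i => P i - Pstar with hD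
  have Dstep : ∀ i, D (i + 1) = β • L (D i) := by
    intro i
    show P (i+1) - Pstar = β • L (P i - Pstar)
    conv_lhs => rw [hPit i, hPstarFix]
    exact Fdiff _ _
  have Dsymm : ∀ i, (D i)ᵀ = D i := by
    intro i
    show (P i - Pstar)ᵀ = P i - Pstar
    rw [transpose_sub, Psymm, hPstarSymm]
  -- choose ε and contraction factor c
  obtain ⟨δ, hδ, hδle⟩ := quadLB hlyap
  obtain ⟨K, hK, hKle⟩ := quadUB Ξ
  set ε := min (δ / (K + 1)) (1/2) with hε
  have hε0 : 0 < ε := lt_min (div_pos hδ (by linarith)) one_half_pos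
  have hε2 : ε ≤ 1/2 := min_le_right _ _
  have hεK : ε * (K + 1) ≤ δ := by
    have h := min_le_left (δ / (K + 1)) (1/2)
    rw [hε]
    calc min (δ / (K + 1)) (1/2) * (K + 1) ≤ (δ / (K + 1)) * (K + 1) :=
          mul_le_mul_of_nonneg_right h (by linarith)
    _ = δ := by field_simp
  set c := 1 - ε with hc
  have hc0 : 0 ≤ c := by rw [hc]; linarith
  have hc1 : c < 1 := by rw [hc]; linarith
  have hxx_nonneg : ∀ x : Fin n → ℝ, 0 ≤ x ⬝ᵥ x := by
    intro x
    exact Finset.sum_nonneg fun i _ => mul_self_nonneg _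
  have hG : (c • Ξ - β • L Ξ).PosSemidef := by
    have hLΞ : (L Ξ)ᵀ = L Ξ := Lsymm hΞsymm
    refine Matrix.PosSemidef.of_dotProduct_mulVec_nonneg ?_ ?_
    · show (c • Ξ - β • L Ξ)ᴴ = _
      rw [conjTranspose_eq_transpose_of_trivial, transpose_sub, transpose_smul, transpose_smul,
        hΞsymm, hLΞ]
    · intro x
      have hstar : star x = x := by
        funext i; simp
      rw [hstar]
      have e : c • Ξ - β • L Ξ = (Ξ - β • L Ξ) - ε • Ξ := by
        rw [hc, sub_smul, one_smul]; abel
      rw [e, sub_mulVec, dotProduct_sub, smul_mulVec, dotProduct_smul]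
      have h1 := hδle x
      have h2 := (abs_le.mp (hKle x)).2
      have h3 := hxx_nonneg x
      have h4 : ε * (x ⬝ᵥ Ξ *ᵥ x) ≤ ε * (K * (x ⬝ᵥ x)) :=
        mul_le_mul_of_nonneg_left h2 hε0.le
      have h5 : ε * (K * (x ⬝ᵥ x)) ≤ δ * (x ⬝ᵥ x) := by nlinarith
      simp only [smul_eq_mul]
      linarith
  -- choose M for the initial sandwich
  obtain ⟨K₀, hK₀, hK₀le⟩ := quadUB (D 0)
  obtain ⟨δΞ, hδΞ, hδΞle⟩ := quadLB hΞ
  set M := (K₀ + 1) / δΞ with hM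
  have hM0 : 0 < M := div_pos (by linarith) hδΞ
  have base : ((M * c ^ 0) • Ξ - D 0).PosSemidef ∧ ((M * c ^ 0) • Ξ + D 0).PosSemidef := by
    have hMδ : M * δΞ = K₀ + 1 := by rw [hM]; field_simp
    have hherm1 : ((M * c ^ 0) • Ξ - D 0)ᴴ = (M * c ^ 0) • Ξ - D 0 := by
      rw [conjTranspose_eq_transpose_of_trivial, transpose_sub, transpose_smul, hΞsymm, Dsymm]
    have hherm2 : ((M * c ^ 0) • Ξ + D 0)ᴴ = (M * c ^ 0) • Ξ + D 0 := by
      rw [conjTranspose_eq_transpose_of_trivial, transpose_add, transpose_smul, hΞsymm, Dsymm]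
    constructor
    · refine Matrix.PosSemidef.of_dotProduct_mulVec_nonneg hherm1 fun x => ?_
      have hstar : star x = x := by funext i; simp
      rw [hstar, sub_mulVec, dotProduct_sub, smul_mulVec, dotProduct_smul]
      have h1 := hδΞle x
      have h2 := (abs_le.mp (hK₀le x)).2
      have h3 := hxx_nonneg x
      simp only [smul_eq_mul, pow_zero, mul_one]
      nlinarith
    · refine Matrix.PosSemidef.of_dotProduct_mulVec_nonneg hherm2 fun x => ?_
      have hstar : star x = x := by funext i; simp
      rw [hstar, add_mulVec, dotProduct_add, smul_mulVec, dotProduct_smul]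
      have h1 := hδΞle x
      have h2 := (abs_le.mp (hK₀le x)).1
      have h3 := hxx_nonneg x
      simp only [smul_eq_mul, pow_zero, mul_one]
      nlinarith
  have sandwich : ∀ i, ((M * c ^ i) • Ξ - D i).PosSemidef ∧ ((M * c ^ i) • Ξ + D i).PosSemidef := by
    intro i
    induction i with
    | zero => exact base
    | succ k ih =>
      have hnn : (0 : ℝ) ≤ M * c ^ k := mul_nonneg hM0.le (pow_nonneg hc0 _)
      constructor
      · have e : (M * c ^ (k+1)) • Ξ - D (k+1)
            = (M * c ^ k) • (c • Ξ - β • L Ξ) + β • L ((M * c ^ k) • Ξ - D k) := by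
          rw [Lsub, Lsmul, Dstep, pow_succ]
          module
        rw [e]
        exact psdAdd (psdSmul hG hnn) (psdSmul (Lmono ih.1) hβ0.le)
      · have e : (M * c ^ (k+1)) • Ξ + D (k+1)
            = (M * c ^ k) • (c • Ξ - β • L Ξ) + β • L ((M * c ^ k) • Ξ + D k) := by
          rw [Ladd, Lsmul, Dstep, pow_succ]
          module
        rw [e]
        exact psdAdd (psdSmul hG hnn) (psdSmul (Lmono ih.2) hβ0.le)
  -- entrywise bounds and convergence
  have hbound : ∀ i (a b : Fin n), |D i a b| ≤ ((Ξ a a + Ξ b b) / 2 * M) * c ^ i := by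
    intro i a b
    have h := entryBound (Dsymm i) (sandwich i).1 (sandwich i).2 a b
    have hTa : ((M * c ^ i) • Ξ) a a = (M * c ^ i) * Ξ a a := rfl
    have hTb : ((M * c ^ i) • Ξ) b b = (M * c ^ i) * Ξ b b := rfl
    rw [hTa, hTb] at h
    calc |D i a b| ≤ ((M * c ^ i) * Ξ a a + (M * c ^ i) * Ξ b b) / 2 := h
    _ = ((Ξ a a + Ξ b b) / 2 * M) * c ^ i := by ring
  apply tendsto_pi_nhds.mpr
  intro a
  apply tendsto_pi_nhds.mpr
  intro b
  have hg : Tendsto (fun i => ((Ξ a a + Ξ b b) / 2 * M) * c ^ i) atTop (nhds 0) := by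
    simpa using (tendsto_pow_atTop_nhds_zero_of_lt_one hc0 hc1).const_mul
      ((Ξ a a + Ξ b b) / 2 * M)
  have h0 : Tendsto (fun i => D i a b) atTop (nhds 0) := by
    refine squeeze_zero_norm (fun i => ?_) hg
    simpa [Real.norm_eq_abs] using hbound i a b
  have h1 : Tendsto (fun i => Pstar a b + D i a b) atTop (nhds (Pstar a b + 0)) :=
    h0.const_add (Pstar a b)
  have h2 : (fun i => P i a b) = fun i => Pstar a b + D i a b := by
    funext i
    show P i a b = Pstar a b + (P i - Pstar) a b
    simp [Matrix.sub_apply]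
  rw [h2]
  simpa using h1
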